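/- The vectors R_± = (0, 0, ±b_z sgn(B_x) α_f, ∓b_y sgn(B_x) α_f, 0, 0, -B_z, B_y)^T, where α_f = sqrt(|B|^2/(4 pi rho) - Δp/rho), are eigenvectors of the CGL quasilinear matrix A with eigenvalues u_x ± c_a, where c_a = sqrt(B_x^2/(4 pi rho) - Δp b_x^2/rho), provided |B|^2/(4 pi) - Δp > 0 and B_x ≠ 0. -/

import Mathlib

open Real

/-- The quasilinear coefficient matrix of the 1-D CGL equations in primitive variables. -/
noncomputable def cglA (ρ ux ppar pperp Bx By Bz : ℝ) : Matrix (Fin 8) (Fin 8) ℝ :=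
  let B := Real.sqrt (Bx^2 + By^2 + Bz^2)
  let bx := Bx / B
  let bY := By / B
  let bz := Bz / B
  let dp := ppar - pperp
  !![ux, ρ, 0, 0, 0, 0, 0, 0;
     0, ux, 0, 0, bx^2/ρ, (1 - bx^2)/ρ,
       By/(4*π*ρ) - 2*bx^2*bY*dp/(ρ*B), Bz/(4*π*ρ) - 2*bx^2*bz*dp/(ρ*B);
     0, 0, ux, 0, bx*bY/ρ, -(bx*bY)/ρ,
       bx*(1 - 2*bY^2)*dp/(ρ*B) - Bx/(4*π*ρ), -(2*bx*bY*bz*dp)/(ρ*B);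
     0, 0, 0, ux, bx*bz/ρ, -(bx*bz)/ρ,
       -(2*bx*bY*bz*dp)/(ρ*B), bx*(1 - 2*bz^2)*dp/(ρ*B) - Bx/(4*π*ρ);
     0, ppar*(1 + 2*bx^2), 2*ppar*bx*bY, 2*ppar*bx*bz, ux, 0, 0, 0;
     0, pperp*(2 - bx^2), -(pperp*bx*bY), -(pperp*bx*bz), 0, ux, 0, 0;
     0, By, -Bx, 0, 0, 0, ux, 0;
     0, Bz, 0, -Bx, 0, 0, 0, ux]

noncomputable def cglA' (ρ ux ppar pperp Bx By Bz B : ℝ) : Matrix (Fin 8) (Fin 8) ℝ :=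
  let bx := Bx / B
  let bY := By / B
  let bz := Bz / B
  let dp := ppar - pperp
  !![ux, ρ, 0, 0, 0, 0, 0, 0;
     0, ux, 0, 0, bx^2/ρ, (1 - bx^2)/ρ,
       By/(4*π*ρ) - 2*bx^2*bY*dp/(ρ*B), Bz/(4*π*ρ) - 2*bx^2*bz*dp/(ρ*B);
     0, 0, ux, 0, bx*bY/ρ, -(bx*bY)/ρ,
       bx*(1 - 2*bY^2)*dp/(ρ*B) - Bx/(4*π*ρ), -(2*bx*bY*bz*dp)/(ρ*B);
     0, 0, 0, ux, bx*bz/ρ, -(bx*bz)/ρ,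
       -(2*bx*bY*bz*dp)/(ρ*B), bx*(1 - 2*bz^2)*dp/(ρ*B) - Bx/(4*π*ρ);
     0, ppar*(1 + 2*bx^2), 2*ppar*bx*bY, 2*ppar*bx*bz, ux, 0, 0, 0;
     0, pperp*(2 - bx^2), -(pperp*bx*bY), -(pperp*bx*bz), 0, ux, 0, 0;
     0, By, -Bx, 0, 0, 0, ux, 0;
     0, Bz, 0, -Bx, 0, 0, 0, ux]

theorem cons_eq_cons' {α : Type*} {n : ℕ} {a b : α} {u v : Fin n → α} :
    Matrix.vecCons a u = Matrix.vecCons b v ↔ a = b ∧ u = v :=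
  Fin.cons_inj

set_option maxHeartbeats 1600000 in
theorem helper (ρ ux ppar pperp Bx By Bz B α k s : ℝ)
    (hρ : ρ ≠ 0) (hπ : π ≠ 0) (hB : B ≠ 0)
    (hdp : ppar - pperp = B^2/(4*π) - α^2*ρ)
    (hs : s = 1 ∨ s = -1) (hk : k = 1 ∨ k = -1) :
    (cglA' ρ ux ppar pperp Bx By Bz B).mulVec
      ![0, 0, s * (Bz / B) * k * α, -(s * (By / B) * k * α), 0, 0, -Bz, By]
    = (ux + s * (k * Bx * α / B)) •
      ![0, 0, s * (Bz / B) * k * α, -(s * (By / B) * k * α), 0, 0, -Bz, By] := by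
  rcases hs with rfl | rfl <;> rcases hk with rfl | rfl <;>
  · simp only [cglA', Matrix.cons_mulVec, Matrix.cons_dotProduct, Matrix.dotProduct_of_isEmpty, Matrix.empty_mulVec, Matrix.empty_eq,
      Matrix.head_cons, Matrix.tail_cons, Matrix.smul_cons, Matrix.smul_empty,
      smul_eq_mul, cons_eq_cons', and_true]
    refine ⟨?_, ?_, ?_, ?_, ?_, ?_, ?_, ?_⟩ <;>
    · try simp only [hdp]
      try field_simp
      try ring

/-- The Alfvén eigenvectors of the CGL matrix, with eigenvalues `u_x ± c_a`. -/
theorem alfven_eigenvectors (ρ ux ppar pperp Bx By Bz : ℝ)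
    (hρ : 0 < ρ) (hB : 0 < Real.sqrt (Bx^2 + By^2 + Bz^2))
    (hfire : 0 < (Bx^2 + By^2 + Bz^2) / (4*π) - (ppar - pperp))
    (hBx : Bx ≠ 0) :
    ∀ s : ℝ, s = 1 ∨ s = -1 →
    (cglA ρ ux ppar pperp Bx By Bz).mulVec
      ![0, 0,
        s * (Bz / Real.sqrt (Bx^2 + By^2 + Bz^2)) * Real.sign Bx
          * Real.sqrt ((Bx^2 + By^2 + Bz^2)/(4*π*ρ) - (ppar - pperp)/ρ),
        -(s * (By / Real.sqrt (Bx^2 + By^2 + Bz^2)) * Real.sign Bx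
          * Real.sqrt ((Bx^2 + By^2 + Bz^2)/(4*π*ρ) - (ppar - pperp)/ρ)),
        0, 0, -Bz, By]
    = (ux + s * Real.sqrt (Bx^2/(4*π*ρ)
          - (ppar - pperp) * (Bx / Real.sqrt (Bx^2 + By^2 + Bz^2))^2 / ρ)) •
      ![0, 0,
        s * (Bz / Real.sqrt (Bx^2 + By^2 + Bz^2)) * Real.sign Bx
          * Real.sqrt ((Bx^2 + By^2 + Bz^2)/(4*π*ρ) - (ppar - pperp)/ρ),
        -(s * (By / Real.sqrt (Bx^2 + By^2 + Bz^2)) * Real.sign Bx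
          * Real.sqrt ((Bx^2 + By^2 + Bz^2)/(4*π*ρ) - (ppar - pperp)/ρ)),
        0, 0, -Bz, By] := by
  intro s hs
  have hπ : (0:ℝ) < π := Real.pi_pos
  have hS : 0 < Bx^2 + By^2 + Bz^2 := Real.sqrt_pos.mp hB
  have hBne : Real.sqrt (Bx^2 + By^2 + Bz^2) ≠ 0 := ne_of_gt hB
  have hB2 : (Real.sqrt (Bx^2 + By^2 + Bz^2))^2 = Bx^2 + By^2 + Bz^2 := Real.sq_sqrt hS.le
  have hrad : 0 ≤ (Bx^2 + By^2 + Bz^2)/(4*π*ρ) - (ppar - pperp)/ρ := by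
    have h : (Bx^2 + By^2 + Bz^2)/(4*π*ρ) - (ppar - pperp)/ρ
        = ((Bx^2 + By^2 + Bz^2)/(4*π) - (ppar - pperp))/ρ := by
      field_simp
    rw [h]; positivity
  have hα2 : (Real.sqrt ((Bx^2 + By^2 + Bz^2)/(4*π*ρ) - (ppar - pperp)/ρ))^2
      = (Bx^2 + By^2 + Bz^2)/(4*π*ρ) - (ppar - pperp)/ρ := Real.sq_sqrt hrad
  have hdp : ppar - pperp = (Real.sqrt (Bx^2 + By^2 + Bz^2))^2/(4*π)
      - (Real.sqrt ((Bx^2 + By^2 + Bz^2)/(4*π*ρ) - (ppar - pperp)/ρ))^2*ρ := by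
    rw [hB2, hα2]; field_simp; ring
  have hc : Real.sqrt (Bx^2/(4*π*ρ)
      - (ppar - pperp) * (Bx / Real.sqrt (Bx^2 + By^2 + Bz^2))^2 / ρ)
      = |Bx| * Real.sqrt ((Bx^2 + By^2 + Bz^2)/(4*π*ρ) - (ppar - pperp)/ρ)
        / Real.sqrt (Bx^2 + By^2 + Bz^2) := by
    have h1 : Bx^2/(4*π*ρ) - (ppar - pperp) * (Bx / Real.sqrt (Bx^2 + By^2 + Bz^2))^2 / ρ
        = (|Bx| * Real.sqrt ((Bx^2 + By^2 + Bz^2)/(4*π*ρ) - (ppar - pperp)/ρ)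
          / Real.sqrt (Bx^2 + By^2 + Bz^2))^2 := by
      conv_rhs => rw [div_pow, mul_pow, sq_abs, hα2, hB2]
      rw [div_pow, hB2]
      field_simp
    rw [h1, Real.sqrt_sq (by positivity)]
  have hcgl : cglA ρ ux ppar pperp Bx By Bz
      = cglA' ρ ux ppar pperp Bx By Bz (Real.sqrt (Bx^2 + By^2 + Bz^2)) := rfl
  rcases hBx.lt_or_gt with h | h
  · have hk : Real.sign Bx = -1 := Real.sign_of_neg h
    have habs : |Bx| = -Bx := abs_of_neg h
    rw [hc, hk, habs, hcgl]
    have := helper ρ ux ppar pperp Bx By Bz (Real.sqrt (Bx^2 + By^2 + Bz^2))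
      (Real.sqrt ((Bx^2 + By^2 + Bz^2)/(4*π*ρ) - (ppar - pperp)/ρ)) (-1) s
      (ne_of_gt hρ) (ne_of_gt hπ) hBne hdp hs (Or.inr rfl)
    rw [show ((-1:ℝ) * Bx) = -Bx from by ring] at this
    exact this
  · have hk : Real.sign Bx = 1 := Real.sign_of_pos h
    have habs : |Bx| = Bx := abs_of_pos h
    rw [hc, hk, habs, hcgl]
    have := helper ρ ux ppar pperp Bx By Bz (Real.sqrt (Bx^2 + By^2 + Bz^2))
      (Real.sqrt ((Bx^2 + By^2 + Bz^2)/(4*π*ρ) - (ppar - pperp)/ρ)) 1 s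
      (ne_of_gt hρ) (ne_of_gt hπ) hBne hdp hs (Or.inl rfl)
    rw [show ((1:ℝ) * Bx) = Bx from by ring] at this
    exact this
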